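/- Stieltjes perturbation bound: let h: ℝ → ℝ be L_h-Lipschitz, let a < b be real numbers, and let μ_1 and μ_2 be Borel probability measures on ℝ, both supported in [a,b], whose cumulative distribution functions G_1 and G_2 satisfy sup_{y∈ℝ} |G_1(y) − G_2(y)| ≤ ε for some ε > 0. Then |∫ h dμ_1 − ∫ h dμ_2| ≤ (b−a)·L_h·ε. -/

import Mathlib

open MeasureTheory

private lemma abel_aux (f g : ℕ → ℝ) (n : ℕ) :
    f 0 * g 0 + ∑ k ∈ Finset.range n, f (k + 1) * (g (k + 1) - g k)
      = f n * g n + ∑ k ∈ Finset.range n, (f k - f (k + 1)) * g k := by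
  induction n with
  | zero => simp
  | succ n ih =>
      rw [Finset.sum_range_succ, Finset.sum_range_succ (f := fun k => (f k - f (k+1)) * g k),
        ← add_assoc, ih]
      ring

private lemma iUnion_Ioc_aux (t : ℕ → ℝ) (ht : Monotone t) (n : ℕ) :
    (⋃ k ∈ Finset.range n, Set.Ioc (t k) (t (k + 1))) = Set.Ioc (t 0) (t n) := by
  induction n with
  | zero => simp
  | succ n ih =>
      rw [Finset.range_add_one, Finset.set_biUnion_insert, ih, Set.union_comm,
        Set.Ioc_union_Ioc_eq_Ioc (ht (Nat.zero_le n)) (ht (Nat.le_succ n))]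

/-- Key approximation: the integral of `h` against `μ` is within `Lh * δ` of an Abel-summed
Riemann–Stieltjes sum built from the CDF at the grid points. -/
private lemma approx_aux (h : ℝ → ℝ) (Lh : ℝ)
    (hLip : ∀ y y' : ℝ, |h y - h y'| ≤ Lh * |y - y'|) (hLh : 0 ≤ Lh)
    (a b : ℝ) (hab : a < b)
    (μ : Measure ℝ) [IsProbabilityMeasure μ] (hsupp : μ (Set.Icc a b) = 1)
    (n : ℕ) (hn : 0 < n) :
    |(∫ y, h y ∂μ) - (h b + ∑ k ∈ Finset.range n,
        (h (a + k * ((b - a) / n)) - h (a + (k + 1) * ((b - a) / n)))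
          * (μ (Set.Iic (a + k * ((b - a) / n)))).toReal)|
      ≤ Lh * ((b - a) / n) := by
  have hn' : (n : ℝ) ≠ 0 := Nat.cast_ne_zero.2 hn.ne'
  set δ : ℝ := (b - a) / n with hδ_def
  have hδpos : 0 < δ := div_pos (by linarith) (Nat.cast_pos.2 hn)
  set t : ℕ → ℝ := fun k => a + k * δ with ht_def
  have ht0 : t 0 = a := by simp [ht_def]
  have htn : t n = b := by
    simp only [ht_def, hδ_def]
    field_simp
    ring
  have htmono : Monotone t := by
    intro i j hij
    simp only [ht_def]
    have : (i : ℝ) ≤ j := Nat.cast_le.2 hij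
    nlinarith
  have htstep : ∀ k, t (k + 1) - t k = δ := by
    intro k
    simp only [ht_def]
    push_cast
    ring
  -- basic measure facts
  have hcompl : μ (Set.Icc a b)ᶜ = 0 := by
    rw [measure_compl measurableSet_Icc (measure_ne_top μ _), hsupp, measure_univ]
    simp
  have hae : ∀ᵐ y ∂μ, y ∈ Set.Icc a b := by
    rw [ae_iff]
    exact hcompl
  -- continuity and integrability of h
  have hcont : Continuous h := by
    have : LipschitzWith (Real.toNNReal Lh) h := by
      apply LipschitzWith.of_dist_le_mul
      intro x y
      rw [Real.dist_eq, Real.dist_eq, Real.coe_toNNReal Lh hLh]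
      exact hLip x y
    exact this.continuous
  have hint : Integrable h μ := by
    refine (integrable_const (|h a| + Lh * (b - a))).mono' hcont.aestronglyMeasurable ?_
    filter_upwards [hae] with y hy
    have h1 : |y - a| ≤ b - a := by
      rw [abs_of_nonneg (by linarith [hy.1])]
      linarith [hy.2]
    have h2 : |h y - h a| ≤ Lh * |y - a| := hLip y a
    have h3 : Lh * |y - a| ≤ Lh * (b - a) := mul_le_mul_of_nonneg_left h1 hLh
    have h4 : |h y| - |h a| ≤ |h y - h a| := abs_sub_abs_le_abs_sub _ _
    rw [Real.norm_eq_abs]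
    linarith
  -- the cells
  set C : ℕ → Set ℝ := fun k => Set.Ioc (t k) (t (k + 1)) with hC_def
  have hCmeas : ∀ k, MeasurableSet (C k) := fun k => measurableSet_Ioc
  -- decomposition of the integral
  have hIoi : μ (Set.Ioi b) = 0 := by
    refine measure_mono_null ?_ hcompl
    intro y hy
    simp only [Set.mem_compl_iff, Set.mem_Icc, Set.mem_Ioi] at *
    intro hc
    linarith [hc.2]
  have hsplit : ∫ y, h y ∂μ
      = (∫ y in Set.Iic a, h y ∂μ) + ∑ k ∈ Finset.range n, ∫ y in C k, h y ∂μ := by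
    have e1 : ∫ y, h y ∂μ = ∫ y in Set.Iic b, h y ∂μ := by
      have hz : μ.restrict (Set.Ioi b) = 0 := Measure.restrict_eq_zero.2 hIoi
      rw [← integral_add_compl measurableSet_Iic hint, Set.compl_Iic, hz,
        integral_zero_measure, add_zero]
    have e2 : Set.Iic b = Set.Iic a ∪ Set.Ioc a b := (Set.Iic_union_Ioc_eq_Iic hab.le).symm
    have e3 : Set.Ioc a b = ⋃ k ∈ Finset.range n, C k := by
      rw [hC_def, iUnion_Ioc_aux t htmono n, ht0, htn]
    have e4 : ∫ y in Set.Ioc a b, h y ∂μ = ∑ k ∈ Finset.range n, ∫ y in C k, h y ∂μ := by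
      rw [e3]
      refine integral_biUnion_finset _ (fun k _ => hCmeas k) ?_ (fun k _ => hint.integrableOn)
      intro i _ j _ hij
      have key : ∀ i j : ℕ, i < j → Disjoint (C i) (C j) := by
        intro i j hij'
        rw [Set.disjoint_left]
        intro x hx1 hx2
        have h1 : x ≤ t (i + 1) := hx1.2
        have h2 : t j < x := hx2.1
        have h3 : t (i + 1) ≤ t j := htmono hij'
        linarith
      rcases lt_or_gt_of_ne hij with hlt | hgt
      · exact key i j hlt
      · exact (key j i hgt).symm
    rw [e1, e2, setIntegral_union (Set.Iic_disjoint_Ioc le_rfl) measurableSet_Ioc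
      hint.integrableOn hint.integrableOn, e4]
  -- the Iic a part
  have hIica : ∫ y in Set.Iic a, h y ∂μ = h a * (μ (Set.Iic a)).toReal := by
    have hcongr : ∀ᵐ y ∂(μ.restrict (Set.Iic a)), h y = h a := by
      filter_upwards [ae_restrict_of_ae hae, ae_restrict_mem measurableSet_Iic] with y h1 h2
      have : y = a := le_antisymm h2 h1.1
      rw [this]
    rw [integral_congr_ae hcongr, setIntegral_const, smul_eq_mul, mul_comm]
    rfl
  -- cell measures in terms of CDF
  have hIocm : ∀ k, (μ (C k)).toReal
      = (μ (Set.Iic (t (k + 1)))).toReal - (μ (Set.Iic (t k))).toReal := by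
    intro k
    have hsub : C k = Set.Iic (t (k + 1)) \ Set.Iic (t k) := Set.Iic_sdiff_Iic.symm
    have hle : Set.Iic (t k) ⊆ Set.Iic (t (k + 1)) :=
      Set.Iic_subset_Iic.2 (htmono (Nat.le_succ k))
    rw [hsub, measure_diff hle measurableSet_Iic.nullMeasurableSet (measure_ne_top μ _),
      ENNReal.toReal_sub_of_le (measure_mono hle) (measure_ne_top μ _)]
  -- G(b) = 1
  have hGb : (μ (Set.Iic b)).toReal = 1 := by
    have h1 : μ (Set.Iic b) = 1 := by
      refine le_antisymm prob_le_one ?_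
      rw [← hsupp]
      exact measure_mono (fun y hy => hy.2)
    rw [h1, ENNReal.toReal_one]
  -- per-cell estimate
  have hcell : ∀ k, |(∫ y in C k, h y ∂μ) - h (t (k + 1)) * (μ (C k)).toReal|
      ≤ Lh * δ * (μ (C k)).toReal := by
    intro k
    have eq1 : (∫ y in C k, h y ∂μ) - h (t (k + 1)) * (μ (C k)).toReal
        = ∫ y in C k, (h y - h (t (k + 1))) ∂μ := by
      rw [integral_sub hint.integrableOn (integrable_const _), setIntegral_const, smul_eq_mul,
        mul_comm]
      rfl
    rw [eq1, ← Real.norm_eq_abs]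
    refine norm_setIntegral_le_of_norm_le_const (measure_lt_top μ _) ?_
    intro x hx
    rw [Real.norm_eq_abs]
    have h1 : |h x - h (t (k + 1))| ≤ Lh * |x - t (k + 1)| := hLip x _
    have h2 : |x - t (k + 1)| ≤ δ := by
      have := hx.1
      have := hx.2
      rw [abs_of_nonpos (by linarith)]
      have := htstep k
      linarith
    calc |h x - h (t (k + 1))| ≤ Lh * |x - t (k + 1)| := h1
      _ ≤ Lh * δ := mul_le_mul_of_nonneg_left h2 hLh
  -- assemble, using Abel summation
  set g : ℕ → ℝ := fun k => (μ (Set.Iic (t k))).toReal with hg_def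
  set f : ℕ → ℝ := fun k => h (t k) with hf_def
  have habel : h b + ∑ k ∈ Finset.range n,
        (h (a + k * ((b - a) / n)) - h (a + (k + 1) * ((b - a) / n)))
          * (μ (Set.Iic (a + k * ((b - a) / n)))).toReal
      = f 0 * g 0 + ∑ k ∈ Finset.range n, f (k + 1) * (g (k + 1) - g k) := by
    have hsum : ∑ k ∈ Finset.range n,
        (h (a + k * ((b - a) / n)) - h (a + (k + 1) * ((b - a) / n)))
          * (μ (Set.Iic (a + k * ((b - a) / n)))).toReal
        = ∑ k ∈ Finset.range n, (f k - f (k + 1)) * g k := by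
      refine Finset.sum_congr rfl fun k _ => ?_
      simp only [hf_def, hg_def, ht_def, hδ_def]
      push_cast
      ring_nf
    have hb' : h b = f n * g n := by
      rw [hf_def, hg_def]
      simp only [htn, hGb, mul_one]
    rw [hsum, hb', abel_aux f g n]
  rw [habel, hsplit]
  have hdiff : (∫ y in Set.Iic a, h y ∂μ) + (∑ k ∈ Finset.range n, ∫ y in C k, h y ∂μ)
      - (f 0 * g 0 + ∑ k ∈ Finset.range n, f (k + 1) * (g (k + 1) - g k))
      = ∑ k ∈ Finset.range n, ((∫ y in C k, h y ∂μ) - h (t (k + 1)) * (μ (C k)).toReal) := by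
    have h0 : (∫ y in Set.Iic a, h y ∂μ) = f 0 * g 0 := by
      rw [hIica, hf_def, hg_def]
      simp only [ht0]
    rw [h0, Finset.sum_sub_distrib]
    have : ∀ k ∈ Finset.range n, f (k + 1) * (g (k + 1) - g k)
        = h (t (k + 1)) * (μ (C k)).toReal := by
      intro k _
      rw [hIocm k]
    rw [Finset.sum_congr rfl this]
    ring
  rw [hdiff]
  calc |∑ k ∈ Finset.range n, ((∫ y in C k, h y ∂μ) - h (t (k + 1)) * (μ (C k)).toReal)|
      ≤ ∑ k ∈ Finset.range n, |(∫ y in C k, h y ∂μ) - h (t (k + 1)) * (μ (C k)).toReal| :=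
        Finset.abs_sum_le_sum_abs _ _
    _ ≤ ∑ k ∈ Finset.range n, Lh * δ * (μ (C k)).toReal :=
        Finset.sum_le_sum fun k _ => hcell k
    _ = Lh * δ * ∑ k ∈ Finset.range n, (g (k + 1) - g k) := by
        rw [Finset.mul_sum]
        refine Finset.sum_congr rfl fun k _ => ?_
        rw [hIocm k]
    _ = Lh * δ * (g n - g 0) := by rw [Finset.sum_range_sub g n]
    _ ≤ Lh * δ * 1 := by
        have h1 : g n - g 0 ≤ 1 := by
          have : g n = 1 := by rw [hg_def]; simp only [htn, hGb]
          have : g 0 ≥ 0 := ENNReal.toReal_nonneg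
          simp only [hg_def] at *
          simp only [htn, hGb]
          linarith
        exact mul_le_mul_of_nonneg_left h1 (by positivity)
    _ = Lh * δ := mul_one _

/-- Stieltjes perturbation bound (Lemma 6): if `h` is `L_h`-Lipschitz, `μ₁, μ₂` are Borel
probability measures supported in `[a,b]` whose CDFs are uniformly within `ε`, then the
integrals of `h` against the two measures differ by at most `(b−a)·L_h·ε`. -/
theorem stmt_17
    (h : ℝ → ℝ) (Lh : ℝ)
    (hLip : ∀ y y' : ℝ, |h y - h y'| ≤ Lh * |y - y'|)
    (a b : ℝ) (hab : a < b)
    (μ₁ μ₂ : Measure ℝ) [IsProbabilityMeasure μ₁] [IsProbabilityMeasure μ₂]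
    (hsupp₁ : μ₁ (Set.Icc a b) = 1) (hsupp₂ : μ₂ (Set.Icc a b) = 1)
    (ε : ℝ) (hε : 0 < ε)
    (hcdf : ∀ y : ℝ, |(μ₁ (Set.Iic y)).toReal - (μ₂ (Set.Iic y)).toReal| ≤ ε) :
    |(∫ y, h y ∂μ₁) - ∫ y, h y ∂μ₂| ≤ (b - a) * Lh * ε := by
  have hLh : 0 ≤ Lh := by
    have := hLip a b
    have h1 : (0 : ℝ) ≤ |h a - h b| := abs_nonneg _
    have h2 : |a - b| = b - a := by
      rw [abs_of_nonpos (by linarith)]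
      ring
    nlinarith [abs_nonneg (a - b)]
  -- it suffices to prove the bound up to an arbitrary positive slack
  refine le_of_forall_pos_le_add ?_
  intro η hη
  -- choose n large
  obtain ⟨n, hn⟩ := exists_nat_gt (max 1 (2 * Lh * (b - a) / η))
  have hn1 : (1 : ℝ) < n := lt_of_le_of_lt (le_max_left _ _) hn
  have hnpos : 0 < n := by exact_mod_cast lt_trans zero_lt_one hn1
  have hncast : (0 : ℝ) < n := by exact_mod_cast hnpos
  set δ : ℝ := (b - a) / n with hδ_def
  set t : ℕ → ℝ := fun k => a + k * δ with ht_def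
  set S₁ : ℝ := h b + ∑ k ∈ Finset.range n,
      (h (a + k * ((b - a) / n)) - h (a + (k + 1) * ((b - a) / n)))
        * (μ₁ (Set.Iic (a + k * ((b - a) / n)))).toReal with hS₁_def
  set S₂ : ℝ := h b + ∑ k ∈ Finset.range n,
      (h (a + k * ((b - a) / n)) - h (a + (k + 1) * ((b - a) / n)))
        * (μ₂ (Set.Iic (a + k * ((b - a) / n)))).toReal with hS₂_def
  have hA₁ : |(∫ y, h y ∂μ₁) - S₁| ≤ Lh * δ :=
    approx_aux h Lh hLip hLh a b hab μ₁ hsupp₁ n hnpos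
  have hA₂ : |(∫ y, h y ∂μ₂) - S₂| ≤ Lh * δ :=
    approx_aux h Lh hLip hLh a b hab μ₂ hsupp₂ n hnpos
  -- bound on |S₁ - S₂|
  have hS : |S₁ - S₂| ≤ (b - a) * Lh * ε := by
    have hdiff : S₁ - S₂ = ∑ k ∈ Finset.range n,
        (h (a + k * ((b - a) / n)) - h (a + (k + 1) * ((b - a) / n)))
          * ((μ₁ (Set.Iic (a + k * ((b - a) / n)))).toReal
            - (μ₂ (Set.Iic (a + k * ((b - a) / n)))).toReal) := by
      rw [hS₁_def, hS₂_def, add_sub_add_left_eq_sub, ← Finset.sum_sub_distrib]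
      have : ∀ k ∈ Finset.range n, (h (a + k * ((b - a) / n)) - h (a + (k + 1) * ((b - a) / n)))
            * (μ₁ (Set.Iic (a + k * ((b - a) / n)))).toReal
          - (h (a + k * ((b - a) / n)) - h (a + (k + 1) * ((b - a) / n)))
            * (μ₂ (Set.Iic (a + k * ((b - a) / n)))).toReal
          = (h (a + k * ((b - a) / n)) - h (a + (k + 1) * ((b - a) / n)))
            * ((μ₁ (Set.Iic (a + k * ((b - a) / n)))).toReal
              - (μ₂ (Set.Iic (a + k * ((b - a) / n)))).toReal) := fun k _ => by ring
      rw [← Finset.sum_congr rfl this]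
    rw [hdiff]
    calc |∑ k ∈ Finset.range n, (h (a + k * ((b - a) / n)) - h (a + (k + 1) * ((b - a) / n)))
          * ((μ₁ (Set.Iic (a + k * ((b - a) / n)))).toReal
            - (μ₂ (Set.Iic (a + k * ((b - a) / n)))).toReal)|
        ≤ ∑ k ∈ Finset.range n, |(h (a + k * ((b - a) / n)) - h (a + (k + 1) * ((b - a) / n)))
          * ((μ₁ (Set.Iic (a + k * ((b - a) / n)))).toReal
            - (μ₂ (Set.Iic (a + k * ((b - a) / n)))).toReal)| :=
          Finset.abs_sum_le_sum_abs _ _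
      _ ≤ ∑ k ∈ Finset.range n, (Lh * ((b - a) / n)) * ε := by
          refine Finset.sum_le_sum fun k _ => ?_
          rw [abs_mul]
          have h1 : |h (a + k * ((b - a) / n)) - h (a + (k + 1) * ((b - a) / n))|
              ≤ Lh * ((b - a) / n) := by
            refine le_trans (hLip _ _) ?_
            have : |(a + k * ((b - a) / n)) - (a + (k + 1) * ((b - a) / n))| = (b - a) / n := by
              have hδ0 : (0 : ℝ) ≤ (b - a) / n := div_nonneg (by linarith) hncast.le
              rw [show (a + k * ((b - a) / n)) - (a + (k + 1) * ((b - a) / n))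
                  = -((b - a) / n) by push_cast; ring, abs_neg, abs_of_nonneg hδ0]
            rw [this]
          have h2 : |(μ₁ (Set.Iic (a + k * ((b - a) / n)))).toReal
              - (μ₂ (Set.Iic (a + k * ((b - a) / n)))).toReal| ≤ ε := hcdf _
          have hnn : (0 : ℝ) ≤ |(μ₁ (Set.Iic (a + k * ((b - a) / n)))).toReal
              - (μ₂ (Set.Iic (a + k * ((b - a) / n)))).toReal| := abs_nonneg _
          calc |h (a + k * ((b - a) / n)) - h (a + (k + 1) * ((b - a) / n))|
                * |(μ₁ (Set.Iic (a + k * ((b - a) / n)))).toReal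
                  - (μ₂ (Set.Iic (a + k * ((b - a) / n)))).toReal|
              ≤ (Lh * ((b - a) / n))
                * |(μ₁ (Set.Iic (a + k * ((b - a) / n)))).toReal
                  - (μ₂ (Set.Iic (a + k * ((b - a) / n)))).toReal| :=
                mul_le_mul_of_nonneg_right h1 hnn
            _ ≤ (Lh * ((b - a) / n)) * ε := by
                exact mul_le_mul_of_nonneg_left h2
                  (mul_nonneg hLh (div_nonneg (by linarith) hncast.le))
      _ = n * ((Lh * ((b - a) / n)) * ε) := by rw [Finset.sum_const, Finset.card_range]; ring
      _ = Lh * ((n : ℝ) * ((b - a) / n)) * ε := by ring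
      _ = (b - a) * Lh * ε := by
          rw [mul_div_cancel₀ _ (ne_of_gt hncast)]
          ring
  -- slack bound
  have hslack : 2 * (Lh * δ) ≤ η := by
    have hn2 : 2 * Lh * (b - a) / η < n := lt_of_le_of_lt (le_max_right _ _) hn
    rw [div_lt_iff₀ hη] at hn2
    have heq : 2 * (Lh * δ) = 2 * Lh * (b - a) / n := by rw [hδ_def]; ring
    rw [heq, div_le_iff₀ hncast]
    nlinarith
  calc |(∫ y, h y ∂μ₁) - ∫ y, h y ∂μ₂|
      ≤ |(∫ y, h y ∂μ₁) - S₁| + |S₁ - S₂| + |S₂ - ∫ y, h y ∂μ₂| := by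
        have := abs_sub_le ((∫ y, h y ∂μ₁)) S₁ (∫ y, h y ∂μ₂)
        have := abs_sub_le S₁ S₂ (∫ y, h y ∂μ₂)
        linarith
    _ ≤ Lh * δ + (b - a) * Lh * ε + Lh * δ := by
        have h3 : |S₂ - ∫ y, h y ∂μ₂| = |(∫ y, h y ∂μ₂) - S₂| := abs_sub_comm _ _
        rw [h3]
        linarith
    _ ≤ (b - a) * Lh * ε + η := by linarith
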